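/- Let H be a Hilbert space with closed subspaces H₁ and H₂ = H₁^⊥, and T : H ⇒ H a set-valued operator. Then the partial inverse T_{H₁}, whose graph is {(P_{H₁}u + P_{H₂}ξ, P_{H₁}ξ + P_{H₂}u) | ξ ∈ T(u)}, is (maximal) monotone if and only if T is (maximal) monotone. -/
import Mathlib


open Filter Topology Set
open scoped RealInnerProductSpace

variable {H : Type*} [NormedAddCommGroup H] [InnerProductSpace ℝ H] [CompleteSpace H]

/-- A set-valued operator `T : H ⇒ H` is monotone. -/
def MonotoneOp (T : H → Set H) : Prop :=
  ∀ x y u v, u ∈ T x → v ∈ T y → 0 ≤ ⟪u - v, x - y⟫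

/-- A set-valued operator is maximal monotone: it is monotone and any pair
monotonically related to its graph belongs to its graph. -/
def MaximalMonotoneOp (T : H → Set H) : Prop :=
  MonotoneOp T ∧ ∀ x u, (∀ y v, v ∈ T y → 0 ≤ ⟪u - v, x - y⟫) → u ∈ T x

/-- `J` is the resolvent `(I + r T)⁻¹` of `T`:
for every `u`, `r⁻¹ • (u - J u) ∈ T (J u)`. -/
def IsResolvent (T : H → Set H) (r : ℝ) (J : H → H) : Prop :=
  ∀ u, r⁻¹ • (u - J u) ∈ T (J u)

/-- Lemma 2.6: the partial inverse of `T` with respect to a closed subspace `H₁`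
is (maximal) monotone iff `T` is (maximal) monotone. `P₁` is the orthogonal
projection onto `H₁` and `x ↦ x - P₁ x` is the projection onto `H₁ᗮ`. -/
theorem stmt_7 (T : H → Set H) (H₁ : Submodule ℝ H)
    (P₁ : H →L[ℝ] H) (hP₁ : ∀ x : H, P₁ x ∈ H₁ ∧ x - P₁ x ∈ H₁ᗮ) :
    (MonotoneOp (fun x => {y : H | ∃ u ξ : H, ξ ∈ T u ∧
        x = P₁ u + (ξ - P₁ ξ) ∧ y = P₁ ξ + (u - P₁ u)}) ↔ MonotoneOp T) ∧
    (MaximalMonotoneOp (fun x => {y : H | ∃ u ξ : H, ξ ∈ T u ∧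
        x = P₁ u + (ξ - P₁ ξ) ∧ y = P₁ ξ + (u - P₁ u)}) ↔ MaximalMonotoneOp T) := by
  -- w in both H₁ and H₁ᗮ implies w = 0
  have hzero : ∀ w : H, w ∈ H₁ → w ∈ H₁ᗮ → w = 0 := by
    intro w h1 h2
    have h3 : ⟪w, w⟫ = 0 := (Submodule.mem_orthogonal H₁ w).mp h2 w h1
    exact inner_self_eq_zero (𝕜 := ℝ) |>.mp h3
  have h1 : ∀ x : H, P₁ (P₁ x) = P₁ x := by
    intro x
    have hm : P₁ x - P₁ (P₁ x) ∈ H₁ := Submodule.sub_mem _ (hP₁ x).1 (hP₁ (P₁ x)).1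
    have := hzero _ hm (hP₁ (P₁ x)).2
    linear_combination (norm := abel) -this
  have h2 : ∀ x : H, P₁ (x - P₁ x) = 0 := by
    intro x
    have hm1 : P₁ (x - P₁ x) ∈ H₁ := (hP₁ (x - P₁ x)).1
    have hm2 : P₁ (x - P₁ x) ∈ H₁ᗮ := by
      have : P₁ (x - P₁ x) = (x - P₁ x) - ((x - P₁ x) - P₁ (x - P₁ x)) := by abel
      rw [this]
      exact Submodule.sub_mem _ (hP₁ x).2 (hP₁ (x - P₁ x)).2
    exact hzero _ hm1 hm2
  have key : ∀ a b c d : H, a ∈ H₁ → c ∈ H₁ → b ∈ H₁ᗮ → d ∈ H₁ᗮ →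
      ⟪a + b, c + d⟫ = ⟪a, c⟫ + ⟪b, d⟫ := by
    intro a b c d ha hc hb hd
    have h1 : ⟪a, d⟫ = 0 := Submodule.inner_right_of_mem_orthogonal ha hd
    have h2 : ⟪b, c⟫ = 0 := by
      rw [real_inner_comm]; exact Submodule.inner_right_of_mem_orthogonal hc hb
    rw [inner_add_left, inner_add_right, inner_add_right, h1, h2]; ring
  have keyin : ∀ u ξ v η : H,
      ⟪(P₁ ξ + (u - P₁ u)) - (P₁ η + (v - P₁ v)), (P₁ u + (ξ - P₁ ξ)) - (P₁ v + (η - P₁ η))⟫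
        = ⟪ξ - η, u - v⟫ := by
    intro u ξ v η
    have e1 : (P₁ ξ + (u - P₁ u)) - (P₁ η + (v - P₁ v))
        = (P₁ ξ - P₁ η) + ((u - P₁ u) - (v - P₁ v)) := by abel
    have e2 : (P₁ u + (ξ - P₁ ξ)) - (P₁ v + (η - P₁ η))
        = (P₁ u - P₁ v) + ((ξ - P₁ ξ) - (η - P₁ η)) := by abel
    have e3 : ξ - η = (P₁ ξ - P₁ η) + ((ξ - P₁ ξ) - (η - P₁ η)) := by abel
    have e4 : u - v = (P₁ u - P₁ v) + ((u - P₁ u) - (v - P₁ v)) := by abel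
    rw [e1, e2, e3, e4,
      key _ _ _ _ (Submodule.sub_mem _ (hP₁ ξ).1 (hP₁ η).1)
        (Submodule.sub_mem _ (hP₁ u).1 (hP₁ v).1)
        (Submodule.sub_mem _ (hP₁ u).2 (hP₁ v).2)
        (Submodule.sub_mem _ (hP₁ ξ).2 (hP₁ η).2),
      key _ _ _ _ (Submodule.sub_mem _ (hP₁ ξ).1 (hP₁ η).1)
        (Submodule.sub_mem _ (hP₁ u).1 (hP₁ v).1)
        (Submodule.sub_mem _ (hP₁ ξ).2 (hP₁ η).2)
        (Submodule.sub_mem _ (hP₁ u).2 (hP₁ v).2)]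
    rw [real_inner_comm ((ξ - P₁ ξ) - (η - P₁ η))]
  -- membership characterization
  have memS : ∀ x y : H,
      (∃ u ξ : H, ξ ∈ T u ∧ x = P₁ u + (ξ - P₁ ξ) ∧ y = P₁ ξ + (u - P₁ u)) ↔
        (P₁ y + (x - P₁ x)) ∈ T (P₁ x + (y - P₁ y)) := by
    intro x y
    constructor
    · rintro ⟨u, ξ, hξ, rfl, rfl⟩
      have hx : P₁ (P₁ u + (ξ - P₁ ξ)) = P₁ u := by rw [map_add, h1, h2, add_zero]
      have hy : P₁ (P₁ ξ + (u - P₁ u)) = P₁ ξ := by rw [map_add, h1, h2, add_zero]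
      rw [hx, hy]
      have e1 : P₁ ξ + (P₁ u + (ξ - P₁ ξ) - P₁ u) = ξ := by abel
      have e2 : P₁ u + (P₁ ξ + (u - P₁ u) - P₁ ξ) = u := by abel
      rw [e1, e2]; exact hξ
    · intro h
      refine ⟨P₁ x + (y - P₁ y), P₁ y + (x - P₁ x), h, ?_, ?_⟩
      · have hu : P₁ (P₁ x + (y - P₁ y)) = P₁ x := by rw [map_add, h1, h2, add_zero]
        have hξ : P₁ (P₁ y + (x - P₁ x)) = P₁ y := by rw [map_add, h1, h2, add_zero]
        rw [hu, hξ]; abel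
      · have hu : P₁ (P₁ x + (y - P₁ y)) = P₁ x := by rw [map_add, h1, h2, add_zero]
        have hξ : P₁ (P₁ y + (x - P₁ x)) = P₁ y := by rw [map_add, h1, h2, add_zero]
        rw [hu, hξ]; abel
  have monoIff : MonotoneOp (fun x => {y : H | ∃ u ξ : H, ξ ∈ T u ∧
      x = P₁ u + (ξ - P₁ ξ) ∧ y = P₁ ξ + (u - P₁ u)}) ↔ MonotoneOp T := by
    constructor
    · intro hS u v ξ η hξ hη
      have := hS (P₁ u + (ξ - P₁ ξ)) (P₁ v + (η - P₁ η))
        (P₁ ξ + (u - P₁ u)) (P₁ η + (v - P₁ v))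
        ⟨u, ξ, hξ, rfl, rfl⟩ ⟨v, η, hη, rfl, rfl⟩
      rwa [keyin] at this
    · intro hT x y s t hs ht
      simp only [Set.mem_setOf_eq] at hs ht
      obtain ⟨u, ξ, hξ, rfl, rfl⟩ := hs
      obtain ⟨v, η, hη, rfl, rfl⟩ := ht
      rw [keyin]
      exact hT u v ξ η hξ hη
  refine ⟨monoIff, ?_⟩
  constructor
  · rintro ⟨hSm, hSmax⟩
    refine ⟨monoIff.mp hSm, ?_⟩
    intro x u hrel
    have hmem : (P₁ u + (x - P₁ x)) ∈ {y : H | ∃ a b : H, b ∈ T a ∧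
        P₁ x + (u - P₁ u) = P₁ a + (b - P₁ b) ∧ y = P₁ b + (a - P₁ a)} := by
      apply hSmax
      intro y v hv
      simp only [Set.mem_setOf_eq] at hv
      obtain ⟨a, b, hb, rfl, rfl⟩ := hv
      rw [keyin]
      exact hrel a b hb
    rw [Set.mem_setOf_eq, memS] at hmem
    have hx : P₁ (P₁ x + (u - P₁ u)) = P₁ x := by rw [map_add, h1, h2, add_zero]
    have hy : P₁ (P₁ u + (x - P₁ x)) = P₁ u := by rw [map_add, h1, h2, add_zero]
    rw [hx, hy] at hmem
    have e1 : P₁ u + (P₁ x + (u - P₁ u) - P₁ x) = u := by abel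
    have e2 : P₁ x + (P₁ u + (x - P₁ x) - P₁ u) = x := by abel
    rwa [e1, e2] at hmem
  · rintro ⟨hTm, hTmax⟩
    refine ⟨monoIff.mpr hTm, ?_⟩
    intro x u hrel
    rw [Set.mem_setOf_eq, memS]
    apply hTmax
    intro a b hb
    have := hrel (P₁ a + (b - P₁ b)) (P₁ b + (a - P₁ a)) ⟨a, b, hb, rfl, rfl⟩
    have h := keyin (P₁ x + (u - P₁ u)) (P₁ u + (x - P₁ x)) a b
    simp only [map_add, h1, h2, add_zero] at h
    have e1 : P₁ u + (P₁ x + (u - P₁ u) - P₁ x) - (P₁ b + (a - P₁ a))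
        = u - (P₁ b + (a - P₁ a)) := by abel
    have e2 : P₁ x + (P₁ u + (x - P₁ x) - P₁ u) - (P₁ a + (b - P₁ b))
        = x - (P₁ a + (b - P₁ b)) := by abel
    rw [e1, e2] at h
    rw [← h]
    exact this
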